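/- Let (M₁,‖·‖₁) ↪ (M₂,‖·‖₂) be an inclusion of normed finitely generated ℤ-modules where ‖·‖₂ restricts to ‖·‖₁, and let Q₂ = M₂/M₁ with the quotient norm ‖·‖_{2,M₂↠Q₂}. Then λ_ℚ(M₂,‖·‖₂) ≤ λ_ℚ(Q₂,‖·‖_{2,M₂↠Q₂}) + λ_ℚ(M₁,‖·‖₁) · rk(M₁). -/

import Mathlib

open scoped TensorProduct

def IsNorm {V : Type*} [AddCommGroup V] [Module ℝ V] (N : V → ℝ) : Prop :=
  (∀ v, N v = 0 ↔ v = 0) ∧ (∀ (r : ℝ) (v : V), N (r • v) = |r| * N v) ∧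
    ∀ v w, N (v + w) ≤ N v + N w

noncomputable def lambdaQ {M : Type*} [AddCommGroup M] (N : ℝ ⊗[ℤ] M → ℝ) : ℝ :=
  sInf {l | ∃ (n : ℕ) (e : Fin n → M),
    LinearIndependent ℚ (fun i => ((1 : ℚ) ⊗ₜ[ℤ] e i : ℚ ⊗[ℤ] M)) ∧
    Submodule.span ℚ (Set.range fun i => ((1 : ℚ) ⊗ₜ[ℤ] e i : ℚ ⊗[ℤ] M)) = ⊤ ∧
    ∀ i, N ((1 : ℝ) ⊗ₜ[ℤ] e i) ≤ l}

noncomputable def qNorm {X Y : Type*} [AddCommGroup X] [AddCommGroup Y]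
    [Module ℝ X] [Module ℝ Y] (N : X → ℝ) (π : X →ₗ[ℝ] Y) (t : Y) : ℝ :=
  sInf {c | ∃ v, π v = t ∧ N v = c}

section Helpers

instance : Module.Flat ℤ ℚ := IsLocalization.flat ℚ (nonZeroDivisors ℤ)
instance : Module.Flat ℤ ℝ := Module.Flat.trans ℤ ℚ ℝ

variable {V : Type*} [AddCommGroup V] [Module ℝ V] {N : V → ℝ}

lemma IsNorm.zero' (h : IsNorm N) : N 0 = 0 := (h.1 0).2 rfl

lemma IsNorm.nonneg' (h : IsNorm N) (v : V) : 0 ≤ N v := by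
  have h1 := h.2.2 v (-v)
  have h2 : N ((-1 : ℝ) • v) = |(-1 : ℝ)| * N v := h.2.1 (-1) v
  simp only [neg_smul, one_smul, abs_neg, abs_one, one_mul] at h2
  rw [add_neg_cancel, h.zero', h2] at h1
  linarith

lemma IsNorm.sum_le (h : IsNorm N) {ι : Type*} (s : Finset ι) (g : ι → V) :
    N (∑ i ∈ s, g i) ≤ ∑ i ∈ s, N (g i) := by
  classical
  induction s using Finset.induction with
  | empty => simp [h.zero']
  | insert _ _ hx ih =>
    rw [Finset.sum_insert hx, Finset.sum_insert hx]
    exact le_trans (h.2.2 _ _) (by linarith)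

/-- The defining set of `lambdaQ`. -/
def lamSet {M : Type*} [AddCommGroup M] (N : ℝ ⊗[ℤ] M → ℝ) : Set ℝ :=
  {l | ∃ (n : ℕ) (e : Fin n → M),
    LinearIndependent ℚ (fun i => ((1 : ℚ) ⊗ₜ[ℤ] e i : ℚ ⊗[ℤ] M)) ∧
    Submodule.span ℚ (Set.range fun i => ((1 : ℚ) ⊗ₜ[ℤ] e i : ℚ ⊗[ℤ] M)) = ⊤ ∧
    ∀ i, N ((1 : ℝ) ⊗ₜ[ℤ] e i) ≤ l}

lemma lambdaQ_eq {M : Type*} [AddCommGroup M] (N : ℝ ⊗[ℤ] M → ℝ) :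
    lambdaQ N = sInf (lamSet N) := rfl

lemma lamSet_mono {M : Type*} [AddCommGroup M] {N : ℝ ⊗[ℤ] M → ℝ} {l l' : ℝ}
    (hl : l ∈ lamSet N) (hll' : l ≤ l') : l' ∈ lamSet N := by
  obtain ⟨n, e, h1, h2, h3⟩ := hl
  exact ⟨n, e, h1, h2, fun i => (h3 i).trans hll'⟩

lemma lambdaQ_zero_of_subsingleton {M : Type*} [AddCommGroup M] (N : ℝ ⊗[ℤ] M → ℝ)
    (hs : Subsingleton (ℚ ⊗[ℤ] M)) : lambdaQ N = 0 := by
  have huniv : lamSet N = Set.univ := by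
    ext l
    simp only [Set.mem_univ, iff_true]
    refine ⟨0, Fin.elim0, linearIndependent_empty_type, Subsingleton.elim _ _, fun i => i.elim0⟩
  rw [lambdaQ_eq, huniv]
  exact Real.sInf_of_not_bddBelow (fun ⟨b, hb⟩ => absurd (hb (Set.mem_univ (b - 1))) (by simp))

lemma lamSet_nonneg_mem {M : Type*} [AddCommGroup M] {N : ℝ ⊗[ℤ] M → ℝ}
    (hnt : Nontrivial (ℚ ⊗[ℤ] M)) (hN : ∀ v, 0 ≤ N v) {l : ℝ} (hl : l ∈ lamSet N) : 0 ≤ l := by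
  obtain ⟨n, e, h1, h2, h3⟩ := hl
  rcases Nat.eq_zero_or_pos n with hn | hn
  · subst hn
    rw [Set.range_eq_empty, Submodule.span_empty] at h2
    exact absurd h2.symm (by
      simpa using (Submodule.nontrivial_iff_ne_bot (N := (⊤ : Submodule ℚ (ℚ ⊗[ℤ] M)))).mpr ?_)
  · exact le_trans (hN _) (h3 ⟨0, hn⟩)

lemma lambdaQ_nonneg {M : Type*} [AddCommGroup M] {N : ℝ ⊗[ℤ] M → ℝ}
    (hN : ∀ v, 0 ≤ N v) : 0 ≤ lambdaQ N := by
  by_cases hs : Subsingleton (ℚ ⊗[ℤ] M)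
  · exact (lambdaQ_zero_of_subsingleton N hs).ge
  · haveI hnt : Nontrivial (ℚ ⊗[ℤ] M) := not_subsingleton_iff_nontrivial.mp hs
    exact Real.sInf_nonneg fun l hl => lamSet_nonneg_mem hnt hN hl

end Helpers
open TensorProduct

section H2
variable {M : Type*} [AddCommGroup M]

lemma span_one_tmul_eq_top :
    Submodule.span ℚ (Set.range fun m : M => ((1 : ℚ) ⊗ₜ[ℤ] m : ℚ ⊗[ℤ] M)) = ⊤ := by
  rw [eq_top_iff]
  rintro x -
  induction x using TensorProduct.induction_on with
  | zero => exact Submodule.zero_mem _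
  | tmul q m =>
    have : q ⊗ₜ[ℤ] m = q • ((1 : ℚ) ⊗ₜ[ℤ] m : ℚ ⊗[ℤ] M) := by
      rw [TensorProduct.smul_tmul', smul_eq_mul, mul_one]
    rw [this]
    exact Submodule.smul_mem _ _ (Submodule.subset_span ⟨m, rfl⟩)
  | add x y hx hy => exact Submodule.add_mem _ hx hy

lemma lamSet_nonempty [Module.Finite ℤ M] (N : ℝ ⊗[ℤ] M → ℝ) :
    ∃ l, l ∈ lamSet N := by
  classical
  obtain ⟨t, hts, hspan, hindep⟩ :=
    exists_linearIndependent ℚ (Set.range fun m : M => ((1 : ℚ) ⊗ₜ[ℤ] m : ℚ ⊗[ℤ] M))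
  rw [span_one_tmul_eq_top] at hspan
  have htfin : t.Finite := hindep.setFinite
  haveI := htfin.fintype
  set n := Fintype.card t with hn
  obtain ⟨f⟩ : Nonempty (Fin n ≃ t) := ⟨(Fintype.equivFin t).symm⟩
  have hchoice : ∀ i : Fin n, ∃ m : M, ((1 : ℚ) ⊗ₜ[ℤ] m : ℚ ⊗[ℤ] M) = (f i : ℚ ⊗[ℤ] M) :=
    fun i => hts (f i).2
  choose e he using hchoice
  have hfe : (fun i : Fin n => ((1 : ℚ) ⊗ₜ[ℤ] e i : ℚ ⊗[ℤ] M)) =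
      fun i => ((f i : ℚ ⊗[ℤ] M)) := funext he
  obtain ⟨l, hl⟩ := Finite.exists_le fun i : Fin n => N ((1 : ℝ) ⊗ₜ[ℤ] e i)
  refine ⟨l, n, e, ?_, ?_, hl⟩
  · rw [hfe]
    exact hindep.comp _ f.injective
  · rw [hfe]
    have : Set.range (fun i : Fin n => ((f i : ℚ ⊗[ℤ] M))) = t := by
      rw [show (fun i : Fin n => ((f i : ℚ ⊗[ℤ] M))) = Subtype.val ∘ f from rfl,
        Set.range_comp, f.range_eq_univ, Set.image_univ, Subtype.range_coe]
    rw [this, hspan]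

lemma card_eq_finrank_of_mem {N : ℝ ⊗[ℤ] M → ℝ} {l : ℝ} {n : ℕ} {e : Fin n → M}
    (h1 : LinearIndependent ℚ (fun i => ((1 : ℚ) ⊗ₜ[ℤ] e i : ℚ ⊗[ℤ] M)))
    (h2 : Submodule.span ℚ (Set.range fun i => ((1 : ℚ) ⊗ₜ[ℤ] e i : ℚ ⊗[ℤ] M)) = ⊤) :
    n = Module.finrank ℚ (ℚ ⊗[ℤ] M) := by
  rw [Module.finrank_eq_card_basis (Module.Basis.mk h1 h2.ge), Fintype.card_fin]

/-- transfer a spanning family from `ℚ ⊗ M` to `ℝ ⊗ M` -/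
lemma span_R_eq_top {n : ℕ} {a : Fin n → M}
    (h : Submodule.span ℚ (Set.range fun i => ((1 : ℚ) ⊗ₜ[ℤ] a i : ℚ ⊗[ℤ] M)) = ⊤) :
    Submodule.span ℝ (Set.range fun i => ((1 : ℝ) ⊗ₜ[ℤ] a i : ℝ ⊗[ℤ] M)) = ⊤ := by
  classical
  set eqv := TensorProduct.AlgebraTensorModule.cancelBaseChange ℤ ℚ ℝ ℝ M
  have hb : (Submodule.span ℚ (Set.range fun i => ((1 : ℚ) ⊗ₜ[ℤ] a i : ℚ ⊗[ℤ] M))).baseChange ℝ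
      = ⊤ := by rw [h, Submodule.baseChange_top]
  rw [Submodule.baseChange_span] at hb
  have hmap : Submodule.map (eqv : ℝ ⊗[ℚ] (ℚ ⊗[ℤ] M) →ₗ[ℝ] ℝ ⊗[ℤ] M)
      (Submodule.span ℝ (TensorProduct.mk ℚ ℝ (ℚ ⊗[ℤ] M) 1 ''
        (Set.range fun i => ((1 : ℚ) ⊗ₜ[ℤ] a i : ℚ ⊗[ℤ] M)))) = ⊤ := by
    rw [hb, Submodule.map_top, LinearEquiv.range]
  rw [Submodule.map_span] at hmap
  rw [← hmap]
  congr 1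
  rw [← Set.range_comp, ← Set.range_comp]
  ext x
  constructor <;> rintro ⟨i, rfl⟩ <;> refine ⟨i, ?_⟩ <;>
    simp [eqv, TensorProduct.mk_apply]

end H2
section Exactness

variable {M₂ : Type*} [AddCommGroup M₂] (M₁ : Submodule ℤ M₂)
variable (A : Type*) [CommRing A] [Module.Flat ℤ A]

lemma coe_baseChange_eq {M N : Type*} [AddCommGroup M] [AddCommGroup N]
    (f : M →ₗ[ℤ] N) : ⇑(LinearMap.baseChange A f) = ⇑(LinearMap.lTensor A f) := by
  funext x
  induction x using TensorProduct.induction_on with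
  | zero => simp
  | tmul a m => simp
  | add x y hx hy => simp only [map_add, hx, hy]

lemma exact_baseChange :
    Function.Exact (LinearMap.baseChange A M₁.subtype) (LinearMap.baseChange A M₁.mkQ) := by
  have h : Function.Exact M₁.subtype M₁.mkQ :=
    LinearMap.exact_iff.mpr (by rw [Submodule.ker_mkQ, Submodule.range_subtype])
  have h2 := Module.Flat.lTensor_exact A h
  rwa [← coe_baseChange_eq, ← coe_baseChange_eq] at h2

lemma baseChange_subtype_injective :
    Function.Injective (LinearMap.baseChange A M₁.subtype) := by
  have h := Module.Flat.lTensor_preserves_injective_linearMap (M := A) M₁.subtype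
    M₁.injective_subtype
  rwa [← coe_baseChange_eq] at h

lemma baseChange_mkQ_surjective :
    Function.Surjective (LinearMap.baseChange A M₁.mkQ) := by
  have h := LinearMap.lTensor_surjective A (Submodule.mkQ_surjective M₁)
  rwa [← coe_baseChange_eq] at h

example [Module.Finite ℤ M₂] : Module.Finite ℤ (M₂ ⧸ M₁) := by infer_instance

end Exactness

set_option maxHeartbeats 2000000 in
/-- For an inclusion `M₁ ⊆ M₂` of normed finitely generated `ℤ`-modules
(the norm of `M₁` being the restriction of that of `M₂`) and `Q₂ = M₂/M₁` with the
quotient norm, one has `λ_ℚ(M₂) ≤ λ_ℚ(Q₂) + λ_ℚ(M₁)·rk(M₁)`. -/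
theorem lambdaQ_le_lambdaQ_quotient_add
    {M₂ : Type*} [AddCommGroup M₂] [Module.Finite ℤ M₂]
    (M₁ : Submodule ℤ M₂)
    (N₂ : ℝ ⊗[ℤ] M₂ → ℝ) (hN₂ : IsNorm N₂) :
    lambdaQ N₂ ≤
      lambdaQ (qNorm N₂ (LinearMap.baseChange ℝ M₁.mkQ))
        + lambdaQ (fun v : ℝ ⊗[ℤ] ↥M₁ => N₂ (LinearMap.baseChange ℝ M₁.subtype v))
            * (Module.finrank ℚ (ℚ ⊗[ℤ] ↥M₁) : ℝ) := by
  classical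
  set ιR := LinearMap.baseChange ℝ M₁.subtype with hιR
  set πR := LinearMap.baseChange ℝ M₁.mkQ with hπR
  set ιQ := LinearMap.baseChange ℚ M₁.subtype with hιQ
  set πQ := LinearMap.baseChange ℚ M₁.mkQ with hπQ
  have hexactR := exact_baseChange M₁ ℝ
  have hexactQ := exact_baseChange M₁ ℚ
  have hinjQ := baseChange_subtype_injective M₁ ℚ
  have hsurjR := baseChange_mkQ_surjective M₁ ℝ
  have hsurjQ := baseChange_mkQ_surjective M₁ ℚ
  set N₁ : ℝ ⊗[ℤ] ↥M₁ → ℝ := fun v => N₂ (ιR v) with hN₁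
  set NQ : ℝ ⊗[ℤ] (M₂ ⧸ M₁) → ℝ := qNorm N₂ πR with hNQ
  have hN₁nonneg : ∀ v, 0 ≤ N₁ v := fun v => hN₂.nonneg' _
  have hNQnonneg : ∀ t, 0 ≤ NQ t := by
    rintro t
    exact Real.sInf_nonneg (by rintro c ⟨v, -, rfl⟩; exact hN₂.nonneg' v)
  set r := Module.finrank ℚ (ℚ ⊗[ℤ] ↥M₁) with hr
  -- degenerate case
  by_cases hss : Subsingleton (ℚ ⊗[ℤ] M₂)
  · rw [lambdaQ_zero_of_subsingleton N₂ hss]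
    have hss₁ : Subsingleton (ℚ ⊗[ℤ] ↥M₁) :=
      ⟨fun x y => hinjQ (Subsingleton.elim _ _)⟩
    have hssQ : Subsingleton (ℚ ⊗[ℤ] (M₂ ⧸ M₁)) := hsurjQ.subsingleton
    rw [lambdaQ_zero_of_subsingleton _ hss₁, lambdaQ_zero_of_subsingleton _ hssQ]
    norm_num
  haveI hnt : Nontrivial (ℚ ⊗[ℤ] M₂) := not_subsingleton_iff_nontrivial.mp hss
  set lamQ := lambdaQ NQ with hlamQ
  set lam1 := lambdaQ N₁ with hlam1
  have hlamQ0 : 0 ≤ lamQ := lambdaQ_nonneg hNQnonneg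
  have hlam10 : 0 ≤ lam1 := lambdaQ_nonneg hN₁nonneg
  refine le_of_forall_pos_le_add fun δ hδ => ?_
  set ε := δ / (r + 3) with hε
  have hεpos : 0 < ε := div_pos hδ (by positivity)
  -- pick near-optimal members
  obtain ⟨l₂0, hl₂0mem, hl₂0lt⟩ := Real.lt_sInf_add_pos (lamSet_nonempty NQ) hεpos
  obtain ⟨l₁0, hl₁0mem, hl₁0lt⟩ := Real.lt_sInf_add_pos (lamSet_nonempty N₁) hεpos
  set l₂ := max l₂0 0 with hl₂def
  set l₁ := max l₁0 0 with hl₁def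
  have hl₂mem : l₂ ∈ lamSet NQ := lamSet_mono hl₂0mem (le_max_left _ _)
  have hl₁mem : l₁ ∈ lamSet N₁ := lamSet_mono hl₁0mem (le_max_left _ _)
  have hl₂lt : l₂ < lamQ + ε := max_lt hl₂0lt (by linarith)
  have hl₁lt : l₁ < lam1 + ε := max_lt hl₁0lt (by linarith)
  have hl₂0 : 0 ≤ l₂ := le_max_right _ _
  have hl₁0 : 0 ≤ l₁ := le_max_right _ _
  obtain ⟨n₂, q, indepQ, spanQ, hnormQ⟩ := hl₂mem
  obtain ⟨n₁, a, indep₁, span₁, hnorm₁⟩ := hl₁mem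
  have hnorm₁' : ∀ k, N₂ ((1 : ℝ) ⊗ₜ[ℤ] ((a k : M₂))) ≤ l₁ := by
    intro k
    have h := hnorm₁ k
    simpa only [hN₁, hιR, LinearMap.baseChange_tmul, Submodule.coe_subtype, Submodule.subtype_apply] using h
  -- n₁ = r, n₂ = rank of quotient
  have hn₁ : n₁ = r := card_eq_finrank_of_mem (N := N₁) (l := l₁) indep₁ span₁
  have hn₂ : n₂ = Module.finrank ℚ (ℚ ⊗[ℤ] (M₂ ⧸ M₁)) :=
    card_eq_finrank_of_mem (N := NQ) (l := l₂) indepQ spanQ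
  -- real span of the `a` family
  have hspanR : Submodule.span ℝ
      (Set.range fun k => ((1 : ℝ) ⊗ₜ[ℤ] a k : ℝ ⊗[ℤ] ↥M₁)) = ⊤ := span_R_eq_top span₁
  -- lifts
  have hm : ∀ j, ∃ mj : M₂, M₁.mkQ mj = q j := fun j => Submodule.mkQ_surjective M₁ (q j)
  choose m hm using hm
  have hw : ∀ j, ∃ v : ℝ ⊗[ℤ] M₂, πR v = (1 : ℝ) ⊗ₜ[ℤ] q j ∧ N₂ v < l₂ + ε := by
    intro j
    have hSne : Set.Nonempty {c | ∃ v, πR v = (1 : ℝ) ⊗ₜ[ℤ] q j ∧ N₂ v = c} := by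
      obtain ⟨v, hv⟩ := hsurjR ((1 : ℝ) ⊗ₜ[ℤ] q j)
      exact ⟨N₂ v, v, hv, rfl⟩
    obtain ⟨cv, ⟨v, hv1, hv2⟩, hlt⟩ := Real.lt_sInf_add_pos hSne hεpos
    refine ⟨v, hv1, ?_⟩
    have hq := hnormQ j
    rw [hNQ] at hq
    calc N₂ v = cv := hv2
      _ < _ + ε := hlt
      _ ≤ l₂ + ε := by
          have : sInf {c | ∃ v, πR v = (1 : ℝ) ⊗ₜ[ℤ] q j ∧ N₂ v = c}
              = qNorm N₂ πR ((1 : ℝ) ⊗ₜ[ℤ] q j) := rfl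
          rw [this]
          linarith
  choose w hw1 hw2 using hw
  -- elements of ℝ ⊗ M₁ measuring the defect
  have hudef : ∀ j, ∃ u : ℝ ⊗[ℤ] ↥M₁, ιR u = (1 : ℝ) ⊗ₜ[ℤ] m j - w j := by
    intro j
    have h0 : πR ((1 : ℝ) ⊗ₜ[ℤ] m j - w j) = 0 := by
      rw [map_sub, hw1 j, hπR, LinearMap.baseChange_tmul, hm j, sub_self]
    exact (hexactR _).mp h0
  choose u hu using hudef
  have hcdef : ∀ j, ∃ c : Fin n₁ → ℝ,
      ∑ k, c k • ((1 : ℝ) ⊗ₜ[ℤ] a k : ℝ ⊗[ℤ] ↥M₁) = u j := by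
    intro j
    have hmem : u j ∈ Submodule.span ℝ
        (Set.range fun k => ((1 : ℝ) ⊗ₜ[ℤ] a k : ℝ ⊗[ℤ] ↥M₁)) := by
      rw [hspanR]; trivial
    exact (Submodule.mem_span_range_iff_exists_fun ℝ).mp hmem
  choose c hc using hcdef
  -- corrected lifts
  set m' : Fin n₂ → M₂ := fun j => m j - ∑ k, ⌊c j k⌋ • ((a k : M₂)) with hm'
  -- key identity in ℝ ⊗ M₂
  have hkey : ∀ j, ((1 : ℝ) ⊗ₜ[ℤ] m' j : ℝ ⊗[ℤ] M₂) =
      w j + ∑ k, Int.fract (c j k) • ((1 : ℝ) ⊗ₜ[ℤ] ((a k : M₂))) := by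
    intro j
    have h1 : ((1 : ℝ) ⊗ₜ[ℤ] m j : ℝ ⊗[ℤ] M₂) =
        w j + ∑ k, c j k • ((1 : ℝ) ⊗ₜ[ℤ] ((a k : M₂))) := by
      have h2 : ιR (u j) = ∑ k, c j k • ((1 : ℝ) ⊗ₜ[ℤ] ((a k : M₂))) := by
        rw [← hc j, map_sum]
        simp only [map_smul, hιR, LinearMap.baseChange_tmul, Submodule.coe_subtype]
      rw [← h2, hu j]
      abel
    have h3 : ((1 : ℝ) ⊗ₜ[ℤ] m' j : ℝ ⊗[ℤ] M₂) =
        (1 : ℝ) ⊗ₜ[ℤ] m j - ∑ k, ((⌊c j k⌋ : ℝ)) • ((1 : ℝ) ⊗ₜ[ℤ] ((a k : M₂))) := by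
      rw [hm']
      simp only [TensorProduct.tmul_sub, TensorProduct.tmul_sum, TensorProduct.tmul_smul]
      congr 1
      refine Finset.sum_congr rfl fun k _ => ?_
      rw [Int.cast_smul_eq_zsmul]
    rw [h3, h1]
    rw [add_sub_assoc, ← Finset.sum_sub_distrib]
    congr 1
    refine Finset.sum_congr rfl fun k _ => ?_
    rw [← sub_smul, Int.self_sub_floor]
  -- norm bound for corrected lifts
  have hm'bound : ∀ j, N₂ ((1 : ℝ) ⊗ₜ[ℤ] m' j) ≤ l₂ + ε + n₁ * l₁ := by
    intro j
    rw [hkey j]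
    calc N₂ (w j + ∑ k, Int.fract (c j k) • ((1 : ℝ) ⊗ₜ[ℤ] ((a k : M₂))))
        ≤ N₂ (w j) + N₂ (∑ k, Int.fract (c j k) • ((1 : ℝ) ⊗ₜ[ℤ] ((a k : M₂)))) :=
          hN₂.2.2 _ _
      _ ≤ N₂ (w j) + ∑ k, N₂ (Int.fract (c j k) • ((1 : ℝ) ⊗ₜ[ℤ] ((a k : M₂)))) := by
          have := hN₂.sum_le Finset.univ
            (fun k => Int.fract (c j k) • ((1 : ℝ) ⊗ₜ[ℤ] ((a k : M₂)) : ℝ ⊗[ℤ] M₂))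
          linarith
      _ ≤ N₂ (w j) + ∑ k : Fin n₁, l₁ := by
          gcongr with k
          rw [hN₂.2.1]
          calc |Int.fract (c j k)| * N₂ ((1 : ℝ) ⊗ₜ[ℤ] ((a k : M₂)))
              ≤ 1 * N₂ ((1 : ℝ) ⊗ₜ[ℤ] ((a k : M₂))) := by
                apply mul_le_mul_of_nonneg_right _ (hN₂.nonneg' _)
                rw [abs_of_nonneg (Int.fract_nonneg _)]
                exact le_of_lt (Int.fract_lt_one _)
            _ ≤ l₁ := by rw [one_mul]; exact hnorm₁' k
      _ ≤ l₂ + ε + n₁ * l₁ := by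
          rw [Finset.sum_const, Finset.card_univ, Fintype.card_fin, nsmul_eq_mul]
          have := hw2 j
          linarith
  -- the combined family
  set F : Fin n₁ ⊕ Fin n₂ → M₂ := Sum.elim (fun k => ((a k : M₂))) m' with hF
  set e : Fin (n₁ + n₂) → M₂ := F ∘ finSumFinEquiv.symm with he
  have hcomp : (fun i => ((1 : ℚ) ⊗ₜ[ℤ] e i : ℚ ⊗[ℤ] M₂)) =
      (Sum.elim (fun k => ((1 : ℚ) ⊗ₜ[ℤ] ((a k : M₂)) : ℚ ⊗[ℤ] M₂))
        (fun j => ((1 : ℚ) ⊗ₜ[ℤ] m' j : ℚ ⊗[ℤ] M₂))) ∘ finSumFinEquiv.symm := by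
    funext i
    rcases h : finSumFinEquiv.symm i with k | j <;> simp [he, hF, h]
  have hrange : (Set.range fun i => ((1 : ℚ) ⊗ₜ[ℤ] e i : ℚ ⊗[ℤ] M₂)) =
      (Set.range fun k => ((1 : ℚ) ⊗ₜ[ℤ] ((a k : M₂)) : ℚ ⊗[ℤ] M₂)) ∪
      (Set.range fun j => ((1 : ℚ) ⊗ₜ[ℤ] m' j : ℚ ⊗[ℤ] M₂)) := by
    rw [hcomp, Set.range_comp, Equiv.range_eq_univ, Set.image_univ, Set.Sum.elim_range]
  -- span computations
  set S₁ := Submodule.span ℚ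
    (Set.range fun k => ((1 : ℚ) ⊗ₜ[ℤ] ((a k : M₂)) : ℚ ⊗[ℤ] M₂)) with hS₁
  set S₂ := Submodule.span ℚ
    (Set.range fun j => ((1 : ℚ) ⊗ₜ[ℤ] m' j : ℚ ⊗[ℤ] M₂)) with hS₂def
  have hrangeιQ : LinearMap.range ιQ = S₁ := by
    rw [LinearMap.range_eq_map, ← span₁, Submodule.map_span, hS₁, ← Set.range_comp]
    congr 1
    all_goals
      funext k
      simp only [Function.comp_apply, hιQ, LinearMap.baseChange_tmul, Submodule.coe_subtype]
  have hπQm' : ∀ j, πQ ((1 : ℚ) ⊗ₜ[ℤ] m' j) = (1 : ℚ) ⊗ₜ[ℤ] q j := by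
    intro j
    rw [hπQ, LinearMap.baseChange_tmul]
    congr 1
    rw [hm', map_sub, map_sum, hm j]
    have : ∀ k : Fin n₁, M₁.mkQ (⌊c j k⌋ • ((a k : M₂))) = 0 := by
      intro k
      rw [map_zsmul]
      have : M₁.mkQ ((a k : M₂)) = 0 := (Submodule.Quotient.mk_eq_zero _).mpr (a k).2
      rw [this, smul_zero]
    rw [Finset.sum_congr rfl fun k _ => this k, Finset.sum_const, smul_zero, sub_zero]
  have hmapπQ : Submodule.map πQ (S₁ ⊔ S₂) = ⊤ := by
    rw [eq_top_iff, ← spanQ]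
    have : (Set.range fun j => ((1 : ℚ) ⊗ₜ[ℤ] q j : ℚ ⊗[ℤ] (M₂ ⧸ M₁))) =
        (fun x => πQ x) '' (Set.range fun j => ((1 : ℚ) ⊗ₜ[ℤ] m' j : ℚ ⊗[ℤ] M₂)) := by
      rw [← Set.range_comp]
      have hfg : ((fun x => πQ x) ∘ fun j => ((1 : ℚ) ⊗ₜ[ℤ] m' j : ℚ ⊗[ℤ] M₂)) =
          fun j => ((1 : ℚ) ⊗ₜ[ℤ] q j : ℚ ⊗[ℤ] (M₂ ⧸ M₁)) := by
        funext j
        exact hπQm' j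
      rw [hfg]
    rw [this, ← Submodule.map_span]
    exact Submodule.map_mono le_sup_right
  have hspanTop : Submodule.span ℚ
      (Set.range fun i => ((1 : ℚ) ⊗ₜ[ℤ] e i : ℚ ⊗[ℤ] M₂)) = ⊤ := by
    rw [hrange, Submodule.span_union, ← hS₁, ← hS₂def, eq_top_iff]
    rintro x -
    have hx : πQ x ∈ Submodule.map πQ (S₁ ⊔ S₂) := hmapπQ ▸ Submodule.mem_top
    obtain ⟨y, hy, hxy⟩ := hx
    have hker : x - y ∈ LinearMap.ker πQ := by
      rw [LinearMap.mem_ker, map_sub, hxy, sub_self]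
    rw [LinearMap.exact_iff.mp hexactQ, hrangeιQ] at hker
    rw [← sub_add_cancel x y]
    exact Submodule.add_mem _ (le_sup_left (α := Submodule ℚ (ℚ ⊗[ℤ] M₂)) hker) hy
  -- dimension count
  haveI : Module.Finite ℚ (ℚ ⊗[ℤ] M₂) := inferInstance
  have hrank : Module.finrank ℚ (ℚ ⊗[ℤ] M₂) =
      Module.finrank ℚ (ℚ ⊗[ℤ] (M₂ ⧸ M₁)) + r := by
    have h1 := LinearMap.finrank_range_add_finrank_ker πQ
    rw [LinearMap.range_eq_top.mpr hsurjQ, finrank_top] at h1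
    rw [LinearMap.exact_iff.mp hexactQ] at h1
    rw [LinearMap.finrank_range_of_inj hinjQ] at h1
    omega
  have hcard : Fintype.card (Fin (n₁ + n₂)) = Module.finrank ℚ (ℚ ⊗[ℤ] M₂) := by
    rw [Fintype.card_fin, hrank, ← hn₂, hn₁]
    omega
  have hindep : LinearIndependent ℚ (fun i => ((1 : ℚ) ⊗ₜ[ℤ] e i : ℚ ⊗[ℤ] M₂)) :=
    linearIndependent_of_top_le_span_of_card_eq_finrank hspanTop.ge hcard
  -- the bound
  set B := l₂ + ε + n₁ * l₁ with hB
  have hmem : B ∈ lamSet N₂ := by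
    refine ⟨n₁ + n₂, e, hindep, hspanTop, ?_⟩
    intro i
    have : N₂ ((1 : ℝ) ⊗ₜ[ℤ] e i) = N₂ ((1 : ℝ) ⊗ₜ[ℤ] F (finSumFinEquiv.symm i)) := rfl
    rw [this]
    rcases h : finSumFinEquiv.symm i with k | j
    · have hn₁pos : (1 : ℝ) ≤ (n₁ : ℝ) := by
        have : 0 < n₁ := k.pos
        exact_mod_cast this
      have : N₂ ((1 : ℝ) ⊗ₜ[ℤ] F (Sum.inl k)) ≤ l₁ := hnorm₁' k
      have hl₁n : l₁ ≤ (n₁ : ℝ) * l₁ := le_mul_of_one_le_left hl₁0 hn₁pos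
      rw [hB]
      linarith
    · exact hm'bound j
  have hle : lambdaQ N₂ ≤ B := by
    rw [lambdaQ_eq]
    exact csInf_le ⟨0, fun x hx => lamSet_nonneg_mem hnt hN₂.nonneg' hx⟩ hmem
  have hεδ : ((r : ℝ) + 2) * ε ≤ δ := by
    have h3 : (0:ℝ) < (r:ℝ) + 3 := by positivity
    calc ((r:ℝ) + 2) * ε ≤ ((r:ℝ) + 3) * ε := by nlinarith
      _ = δ := by rw [hε]; field_simp
  have hfinal : B ≤ lamQ + lam1 * r + δ := by
    have h1 : (n₁ : ℝ) * l₁ ≤ (r : ℝ) * (lam1 + ε) := by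
      rw [hn₁]
      exact mul_le_mul_of_nonneg_left hl₁lt.le (Nat.cast_nonneg r)
    rw [hB]
    nlinarith [Nat.cast_nonneg (α := ℝ) r]
  linarith
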